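/- arXiv:1601.00108 — 3 statements merged into one kernel-verified Lean document; each statement's English description precedes it below -/
import Mathlib

section
/- Let S and R be finite sets and let N be a real S×R matrix that is homogeneous of order κ for some positive integer κ, i.e. every column of N has exactly two nonzero entries, one equal to κ and one equal to −κ. Let c̄ ∈ ℝ^S be strictly positive, let k ∈ ℝ^R have nonnegative entries, and let A = −diag(c̄)⁻¹ · N · diag(k) · Nᵀ. Then for all i, o ∈ S and all t ≥ 0, 0 ≤ (e^{tA})_{oi} ≤ 1. (Upper bound on Sensitivity for homogeneous systems: S ≤ 1.) -/
open Matrix NormedSpace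

/-- `N` is homogeneous of order `κ`: every column has exactly two nonzero entries, one equal
to `κ` and one equal to `−κ`. -/
def IsHomogeneous {S R : Type*} (N : Matrix S R ℝ) (κ : ℕ) : Prop :=
  ∀ r : R, ∃ s₁ s₂ : S, s₁ ≠ s₂ ∧ N s₁ r = (κ : ℝ) ∧ N s₂ r = -(κ : ℝ) ∧
    ∀ s : S, s ≠ s₁ → s ≠ s₂ → N s r = 0

section Aux

variable {S : Type*} [Fintype S] [DecidableEq S]

lemma exp_entry_hasSum (B : Matrix S S ℝ) (o i : S) :
    HasSum (fun n : ℕ => (((n.factorial : ℝ)⁻¹ • B ^ n : Matrix S S ℝ)) o i) (exp B o i) := by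
  letI : SeminormedRing (Matrix S S ℝ) := Matrix.linftyOpSemiNormedRing
  letI : NormedRing (Matrix S S ℝ) := Matrix.linftyOpNormedRing
  letI : NormedAlgebra ℝ (Matrix S S ℝ) := Matrix.linftyOpNormedAlgebra
  have h := exp_series_hasSum_exp' (𝕂 := ℝ) B
  exact Pi.hasSum.1 (Pi.hasSum.1 h o) i

lemma pow_entry_nonneg {C : Matrix S S ℝ} (hC : ∀ o i, 0 ≤ C o i) (n : ℕ) :
    ∀ o i, 0 ≤ (C ^ n) o i := by
  induction n with
  | zero => intro o i; by_cases h : o = i <;> simp [Matrix.one_apply, h]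
  | succ n ih =>
      intro o i
      rw [pow_succ, Matrix.mul_apply]
      exact Finset.sum_nonneg fun j _ => mul_nonneg (ih o j) (hC j i)

lemma exp_entry_nonneg_of_nonneg {C : Matrix S S ℝ} (hC : ∀ o i, 0 ≤ C o i) (o i : S) :
    0 ≤ exp C o i := by
  refine hasSum_le (fun n => ?_) hasSum_zero (exp_entry_hasSum C o i)
  have := pow_entry_nonneg hC n o i
  simp only [Matrix.smul_apply, smul_eq_mul]
  positivity

lemma exp_entry_nonneg {B : Matrix S S ℝ} (hoff : ∀ o i, o ≠ i → 0 ≤ B o i) (o i : S) :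
    0 ≤ exp B o i := by
  set α : ℝ := ∑ s, |B s s| with hα
  set C : Matrix S S ℝ := B + Matrix.diagonal (fun _ => α) with hCdef
  have hC : ∀ o i, 0 ≤ C o i := by
    intro o i
    by_cases h : o = i
    · subst h
      simp only [hCdef, Matrix.add_apply, Matrix.diagonal_apply_eq]
      have h1 : |B o o| ≤ α := by
        rw [hα]
        exact Finset.single_le_sum (f := fun s => |B s s|)
          (fun s _ => abs_nonneg _) (Finset.mem_univ o)
      have := neg_abs_le (B o o)
      linarith
    · simpa [hCdef, Matrix.diagonal_apply_ne _ h] using hoff o i h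
  have hBeq : B = C + Matrix.diagonal (fun _ => -α) := by
    rw [hCdef]
    ext s s'
    by_cases h : s = s' <;> simp [Matrix.diagonal, h]
  have hcomm : Commute C (Matrix.diagonal (fun _ : S => -α)) := by
    have h1 : Matrix.diagonal (fun _ : S => -α) = (-α) • (1 : Matrix S S ℝ) := by
      ext s s'; by_cases h : s = s' <;> simp [Matrix.diagonal, Matrix.one_apply, h]
    rw [h1]
    exact (Commute.one_right C).smul_right (-α)
  have hsplit : exp B = exp C * exp (Matrix.diagonal (fun _ : S => -α)) := by
    rw [hBeq]
    exact Matrix.exp_add_of_commute C _ hcomm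
  rw [hsplit, Matrix.exp_diagonal, Matrix.mul_apply]
  refine Finset.sum_nonneg fun j _ => ?_
  by_cases h : j = i
  · subst h
    refine mul_nonneg (exp_entry_nonneg_of_nonneg hC o j) ?_
    rw [Matrix.diagonal_apply_eq]
    rw [Pi.coe_exp, ← Real.exp_eq_exp_ℝ]
    exact (Real.exp_pos _).le
  · rw [Matrix.diagonal_apply_ne _ h, mul_zero]

lemma pow_row_sum {B : Matrix S S ℝ} (hrow : ∀ o, ∑ i, B o i = 0) (n : ℕ) (o : S) :
    ∑ i, (B ^ n) o i = (if n = 0 then (1 : ℝ) else 0) := by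
  induction n generalizing o with
  | zero => simp [Matrix.one_apply]
  | succ n ih =>
      simp only [pow_succ, Matrix.mul_apply, Nat.succ_ne_zero, if_false]
      rw [Finset.sum_comm]
      have h : ∀ j ∈ Finset.univ, ∑ i : S, (B ^ n) o j * B j i = 0 := by
        intro j _
        rw [← Finset.mul_sum, hrow j, mul_zero]
      rw [Finset.sum_congr rfl h]
      simp

lemma exp_row_sum {B : Matrix S S ℝ} (hrow : ∀ o, ∑ i, B o i = 0) (o : S) :
    ∑ i, exp B o i = 1 := by
  have h1 : HasSum (fun n : ℕ => ∑ i, (((n.factorial : ℝ)⁻¹ • B ^ n : Matrix S S ℝ)) o i)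
      (∑ i, exp B o i) := hasSum_sum (fun i _ => exp_entry_hasSum B o i)
  have h2 : (fun n : ℕ => ∑ i, (((n.factorial : ℝ)⁻¹ • B ^ n : Matrix S S ℝ)) o i)
      = fun n : ℕ => (if n = 0 then (1 : ℝ) else 0) := by
    funext n
    simp only [Matrix.smul_apply, smul_eq_mul, ← Finset.mul_sum, pow_row_sum hrow]
    by_cases h : n = 0 <;> simp [h]
  rw [h2] at h1
  have h3 : HasSum (fun n : ℕ => (if n = 0 then (1 : ℝ) else 0)) 1 := by
    simpa using hasSum_ite_eq (0 : ℕ) (1 : ℝ)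
  exact h1.unique h3

end Aux

/-- Theorem 4.3 (`thm:SensitivityUpBoundHomogenous`): upper bound on the Sensitivity for
homogeneous systems. If `N` is homogeneous of some order `κ > 0`, `c̄ > 0`, `k ≥ 0`, then
`0 ≤ (e^{tA})_{oi} ≤ 1` for all `t ≥ 0`; in particular `S ≤ 1`. -/
theorem sensitivity_upper_bound_homogeneous
    {S R : Type*} [Fintype S] [Fintype R] [DecidableEq S] [DecidableEq R]
    (N : Matrix S R ℝ) (κ : ℕ) (hκ : 0 < κ) (hhom : IsHomogeneous N κ)
    (cbar : S → ℝ) (k : R → ℝ)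
    (hcbar : ∀ s, 0 < cbar s) (hk : ∀ r, 0 ≤ k r)
    (A : Matrix S S ℝ)
    (hA : A = -(Matrix.diagonal (fun s => (cbar s)⁻¹) * N * Matrix.diagonal k * Nᵀ)) :
    ∀ (i o : S) (t : ℝ), 0 ≤ t →
      0 ≤ exp (t • A) o i ∧ exp (t • A) o i ≤ 1 := by
  have hκ' : (0 : ℝ) < κ := by exact_mod_cast hκ
  have hAentry : ∀ o i, A o i = -∑ r, (cbar o)⁻¹ * N o r * k r * N i r := by
    intro o i
    rw [hA, Matrix.neg_apply, neg_inj, Matrix.mul_apply]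
    refine Finset.sum_congr rfl fun r _ => ?_
    rw [Matrix.mul_diagonal, Matrix.diagonal_mul, Matrix.transpose_apply]
  have hcolN : ∀ r, ∑ s, N s r = 0 := by
    intro r
    obtain ⟨s₁, s₂, hne, h1, h2, h0⟩ := hhom r
    have hsub : ({s₁, s₂} : Finset S) ⊆ Finset.univ := Finset.subset_univ _
    have h := Finset.sum_subset hsub (fun x _ hx => by
      simp only [Finset.mem_insert, Finset.mem_singleton] at hx
      push_neg at hx
      exact h0 x hx.1 hx.2)
    rw [← h, Finset.sum_pair hne, h1, h2]
    ring
  have hprod : ∀ (r : R) (o i : S), o ≠ i → N o r * N i r ≤ 0 := by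
    intro r o i hoi
    obtain ⟨s₁, s₂, hne, h1, h2, h0⟩ := hhom r
    by_cases ho1 : o = s₁
    · by_cases hi2 : i = s₂
      · subst ho1; subst hi2; rw [h1, h2]; nlinarith
      · have hi1 : i ≠ s₁ := fun h => hoi (ho1.trans h.symm)
        rw [h0 i hi1 hi2, mul_zero]
    · by_cases ho2 : o = s₂
      · by_cases hi1 : i = s₁
        · subst ho2; subst hi1; rw [h1, h2]; nlinarith
        · have hi2 : i ≠ s₂ := fun h => hoi (ho2.trans h.symm)
          rw [h0 i hi1 hi2, mul_zero]
      · rw [h0 o ho1 ho2, zero_mul]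
  have hoffA : ∀ o i, o ≠ i → 0 ≤ A o i := by
    intro o i hoi
    rw [hAentry, neg_nonneg]
    refine Finset.sum_nonpos fun r _ => ?_
    have h1 : (cbar o)⁻¹ * N o r * k r * N i r
        = (cbar o)⁻¹ * k r * (N o r * N i r) := by ring
    rw [h1]
    exact mul_nonpos_of_nonneg_of_nonpos
      (mul_nonneg (inv_nonneg.2 (hcbar o).le) (hk r)) (hprod r o i hoi)
  have hrowA : ∀ o, ∑ i, A o i = 0 := by
    intro o
    rw [Finset.sum_congr rfl (fun i _ => hAentry o i), Finset.sum_neg_distrib,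
      neg_eq_zero, Finset.sum_comm]
    refine Finset.sum_eq_zero fun r _ => ?_
    rw [← Finset.mul_sum, hcolN r, mul_zero]
  intro i o t ht
  set B : Matrix S S ℝ := t • A with hB
  have hoffB : ∀ o' i', o' ≠ i' → 0 ≤ B o' i' := by
    intro o' i' h
    simpa [hB] using mul_nonneg ht (hoffA o' i' h)
  have hrowB : ∀ o', ∑ i', B o' i' = 0 := by
    intro o'
    simp only [hB, Matrix.smul_apply, smul_eq_mul, ← Finset.mul_sum, hrowA o', mul_zero]
  have hnn : ∀ o' i', 0 ≤ exp B o' i' := fun o' i' => exp_entry_nonneg hoffB o' i'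
  refine ⟨hnn o i, ?_⟩
  calc exp B o i ≤ ∑ j, exp B o j :=
        Finset.single_le_sum (fun j _ => hnn o j) (Finset.mem_univ i)
    _ = 1 := exp_row_sum hrowB o
end

section
/- Let S and R be finite sets, N a real S×R matrix, and fix i, o ∈ S and a subset R₁ ⊆ R. For strictly positive c̄ ∈ ℝ^S and nonnegative k ∈ ℝ^R write A(c̄,k) = −diag(c̄)⁻¹ · N · diag(k) · Nᵀ. Then for every strictly positive c̄ ∈ ℝ^S, every nonnegative k ∈ ℝ^R with k_r = 0 for all r ∉ R₁, every t ≥ 0, and every ε > 0, there exist a strictly positive c̄' ∈ ℝ^S, a strictly positive k' ∈ ℝ^R, and t' ≥ 0 such that (e^{t'A(c̄',k')})_{oi} > (e^{tA(c̄,k)})_{oi} − ε. (The maximal Sensitivity of a subsystem is at most the maximal Sensitivity of the full system.) -/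
open Matrix NormedSpace

/-- The linearized reaction matrix `A(c̄,k) = −diag(c̄)⁻¹ N diag(k) Nᵀ`. -/
noncomputable def linMatrix {S R : Type*} [Fintype S] [Fintype R] [DecidableEq S]
    [DecidableEq R] (N : Matrix S R ℝ) (c : S → ℝ) (k : R → ℝ) : Matrix S S ℝ :=
  -(Matrix.diagonal (fun s => (c s)⁻¹) * N * Matrix.diagonal k * Nᵀ)

/-- Theorem 4.5 (`th:PSsubsystems`), Sensitivity part: the maximal Sensitivity of a subsystem
(obtained by setting `k_r = 0` for `r ∉ R₁`) is at most the maximal Sensitivity of the full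
system: any value `(e^{tA(c̄,k)})_{oi}` attained with subsystem rates can be approximated to
within `ε` by `(e^{t'A(c̄',k')})_{oi}` with strictly positive rates `k'`. -/
theorem maxSensitivity_subsystem_le
    {S R : Type*} [Fintype S] [Fintype R] [DecidableEq S] [DecidableEq R]
    (N : Matrix S R ℝ) (i o : S) (R₁ : Set R)
    (cbar : S → ℝ) (hcbar : ∀ s, 0 < cbar s)
    (k : R → ℝ) (hk : ∀ r, 0 ≤ k r) (hk0 : ∀ r ∉ R₁, k r = 0)
    (t : ℝ) (ht : 0 ≤ t) (ε : ℝ) (hε : 0 < ε) :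
    ∃ (cbar' : S → ℝ) (k' : R → ℝ) (t' : ℝ),
      (∀ s, 0 < cbar' s) ∧ (∀ r, 0 < k' r) ∧ 0 ≤ t' ∧
      exp (t' • linMatrix N cbar' k') o i >
        exp (t • linMatrix N cbar k) o i - ε := by
  classical
  letI : SeminormedRing (Matrix S S ℝ) := Matrix.linftyOpSemiNormedRing
  letI : NormedRing (Matrix S S ℝ) := Matrix.linftyOpNormedRing
  letI : NormedAlgebra ℝ (Matrix S S ℝ) := Matrix.linftyOpNormedAlgebra
  letI : NormedAlgebra ℚ (Matrix S S ℝ) := Matrix.linftyOpNormedAlgebra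
  set f : ℝ → ℝ := fun δ => exp (t • linMatrix N cbar (fun r => k r + δ)) o i with hf
  have hcontM : Continuous fun δ : ℝ => t • linMatrix N cbar (fun r => k r + δ) := by
    refine (continuous_const_smul t).comp (f := fun δ : ℝ => linMatrix N cbar (fun r => k r + δ)) ?_
    unfold linMatrix
    exact (((continuous_const.matrix_mul
      ((continuous_pi fun r => (continuous_const.add continuous_id)).matrix_diagonal)).matrix_mul
      continuous_const)).neg
  have hcont : Continuous f :=
    ((NormedSpace.exp_continuous.comp hcontM).matrix_elem o i)
  have h0 : f 0 = exp (t • linMatrix N cbar k) o i := by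
    simp [hf]
  have htend : Filter.Tendsto f (nhdsWithin 0 (Set.Ioi 0)) (nhds (f 0)) :=
    (hcont.continuousAt).continuousWithinAt.tendsto
  have hev : ∀ᶠ δ in nhdsWithin 0 (Set.Ioi 0), f δ > f 0 - ε := by
    have : ∀ᶠ δ in nhdsWithin 0 (Set.Ioi 0), f δ ∈ Set.Ioi (f 0 - ε) :=
      htend (Ioi_mem_nhds (by linarith))
    exact this
  obtain ⟨δ, hδpos, hδ⟩ := (hev.and self_mem_nhdsWithin).exists
  refine ⟨cbar, fun r => k r + δ, t, hcbar, fun r => ?_, ht, ?_⟩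
  · have h1 := hk r
    have h2 : (0:ℝ) < δ := hδ
    show 0 < k r + δ
    linarith
  rw [← h0]
  exact hδpos
end

section
/- Let S and R be finite sets, N a real S×R matrix, and fix i, o ∈ S. For strictly positive c̄ ∈ ℝ^S and nonnegative k ∈ ℝ^R write A(c̄,k) = −diag(c̄)⁻¹ · N · diag(k) · Nᵀ. Suppose c̄ ∈ ℝ^S is strictly positive, k ∈ ℝ^R is nonnegative, and e^{tA(c̄,k)} converges entrywise to a matrix L as t → +∞. Then for every ε > 0 there exist a strictly positive c̄' ∈ ℝ^S, a strictly positive k' ∈ ℝ^R, and t' ≥ 0 such that (e^{t'A(c̄',k')})_{oi} > L_{oi} − ε. (The maximal Sensitivity is bounded below by the maximal inverse Precision over all subsystems.) -/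
open Matrix NormedSpace Filter

attribute [local instance] Matrix.linftyOpNormedRing Matrix.linftyOpNormedAlgebra

/-- Theorem 4.6: the maximal Sensitivity is bounded from below by the maximal inverse
Precision over all subsystems: if, for parameters `(c̄,k)` with `k ≥ 0`, `e^{tA(c̄,k)}` tends
entrywise to `L` as `t → ∞`, then for every `ε > 0` the value `L_{oi}` is approached to
within `ε` by `(e^{t'A(c̄',k')})_{oi}` for some strictly positive parameters and `t' ≥ 0`. -/
theorem maxSensitivity_ge_invPrecision_subsystem
    {S R : Type*} [Fintype S] [Fintype R] [DecidableEq S] [DecidableEq R]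
    (N : Matrix S R ℝ) (i o : S)
    (cbar : S → ℝ) (hcbar : ∀ s, 0 < cbar s)
    (k : R → ℝ) (hk : ∀ r, 0 ≤ k r)
    (L : Matrix S S ℝ)
    (hL : Filter.Tendsto (fun t : ℝ => NormedSpace.exp (t • linMatrix N cbar k)) Filter.atTop (nhds L))
    (ε : ℝ) (hε : 0 < ε) :
    ∃ (cbar' : S → ℝ) (k' : R → ℝ) (t' : ℝ),
      (∀ s, 0 < cbar' s) ∧ (∀ r, 0 < k' r) ∧ 0 ≤ t' ∧
      NormedSpace.exp (t' • linMatrix N cbar' k') o i > L o i - ε := by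
  have h1 : Tendsto (fun t : ℝ => NormedSpace.exp (t • linMatrix N cbar k) o i) atTop (nhds (L o i)) :=
    (tendsto_pi_nhds.mp (tendsto_pi_nhds.mp hL o)) i
  have hhalf : L o i - ε / 2 < L o i := by linarith
  obtain ⟨t, ht0, ht⟩ := ((eventually_ge_atTop (0:ℝ)).and
    (h1.eventually (eventually_gt_nhds hhalf))).exists
  -- continuity in δ
  have hcont : Continuous (fun δ : ℝ =>
      NormedSpace.exp (t • linMatrix N cbar (fun r => k r + δ)) o i) := by
    have hd : Continuous (fun δ : ℝ => (Matrix.diagonal (fun r => k r + δ) : Matrix R R ℝ)) := by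
      apply continuous_matrix
      intro a b
      by_cases h : a = b <;> simp [Matrix.diagonal_apply, h] <;> fun_prop
    have hlin : Continuous (fun δ : ℝ => t • linMatrix N cbar (fun r => k r + δ)) := by
      unfold linMatrix
      exact (((((continuous_const.matrix_mul hd).matrix_mul continuous_const)).neg).const_smul t)
    exact ((continuous_apply i).comp (continuous_apply o)).comp ((exp_continuous (𝔸:=Matrix S S ℝ)).comp hlin)
  have h0 : NormedSpace.exp (t • linMatrix N cbar (fun r => k r + 0)) o i > L o i - ε / 2 := by
    simpa using ht
  have hev : ∀ᶠ δ in nhdsWithin (0:ℝ) (Set.Ioi 0),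
      NormedSpace.exp (t • linMatrix N cbar (fun r => k r + δ)) o i > L o i - ε := by
    apply Filter.Eventually.filter_mono nhdsWithin_le_nhds
    have : L o i - ε < NormedSpace.exp (t • linMatrix N cbar (fun r => k r + 0)) o i := by linarith
    exact hcont.continuousAt.eventually (eventually_gt_nhds this)
  obtain ⟨δ, hδgt, hδpos⟩ := (hev.and (Filter.eventually_iff.mpr self_mem_nhdsWithin : ∀ᶠ δ in nhdsWithin (0:ℝ) (Set.Ioi 0), δ ∈ Set.Ioi 0)).exists
  exact ⟨cbar, fun r => k r + δ, t, hcbar, fun r => by have h := Set.mem_Ioi.mp hδpos; have := hk r; show 0 < k r + δ; linarith,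
    ht0, hδgt⟩
end
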